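/- With G(t,z) defined as above, for any 0 ≤ z₁ < z₂ ≤ 1 and t ≥ 0: (1−γ)(z₂−z₁) ≤ G(t,z₂) − G(t,z₁) ≤ (1+γ)(z₂−z₁), where γ = 2α + β/ω' < 1. In particular, for fixed t the map z ↦ G(t,z) is a strictly increasing bi-Lipschitz homeomorphism onto its image, so continuum particles never collide. -/

import Mathlib

open Function Set intervalIntegral

lemma comp_line {u : ℝ × ℝ → ℝ} (hu : Differentiable ℝ u) {f g : ℝ → ℝ} {f' g' s : ℝ}
    (hf : HasDerivAt f f' s) (hg : HasDerivAt g g' s) :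
    HasDerivAt (fun s => u (f s, g s)) (fderiv ℝ u (f s, g s) (f', g')) s :=
  (hu _).hasFDerivAt.comp_hasDerivAt s (hf.prodMk hg)

lemma applyv_fderiv {u : ℝ × ℝ → ℝ} (hu : ContDiff ℝ 2 u) (v p : Prod ℝ ℝ) :
    HasFDerivAt (fun p => fderiv ℝ u p v) ((fderiv ℝ (fderiv ℝ u) p).flip v) p := by
  have h1 : Differentiable ℝ (fderiv ℝ u) :=
    (hu.fderiv_right (m := 1) (by norm_num)).differentiable (by norm_num)
  have := (h1 p).hasFDerivAt.clm_apply (hasFDerivAt_const v p)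
  simpa using this

lemma contDiff3_deriv {f : ℝ → ℝ} (h : ContDiff ℝ 4 f) : ContDiff ℝ 3 (deriv f) := by
  have h' : ContDiff ℝ (3 + 1) f := by exact_mod_cast h
  exact (contDiff_succ_iff_deriv.mp h').2.2

/-- if `f 0 = f 1`, `f` is `C⁴`, then `|f x - f 0| ≤ ∫₀¹ |f''|` on `[0,1]`. -/

lemma data_bound {f : ℝ → ℝ} (hf : ContDiff ℝ 4 f) (h01 : f 0 = f 1) {x : ℝ}
    (hx : x ∈ Icc (0:ℝ) 1) : |f x - f 0| ≤ ∫ s in (0:ℝ)..1, |deriv (deriv f) s| := by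
  set A := ∫ s in (0:ℝ)..1, |deriv (deriv f) s| with hA
  have hf1 : ContDiff ℝ 3 (deriv f) := contDiff3_deriv hf
  have hf2 : Continuous (deriv (deriv f)) := hf1.continuous_deriv (by norm_num)
  have hf1c : Continuous (deriv f) := hf1.continuous
  -- Rolle
  obtain ⟨ξ, hξ, hξ0⟩ := exists_deriv_eq_zero (f := f) one_pos hf.continuous.continuousOn h01
  have hξI : ξ ∈ Icc (0:ℝ) 1 := ⟨hξ.1.le, hξ.2.le⟩
  -- |deriv f| ≤ A on [0,1]
  have hd : ∀ y ∈ Icc (0:ℝ) 1, |deriv f y| ≤ A := by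
    intro y hy
    have hftc : ∫ s in ξ..y, deriv (deriv f) s = deriv f y - deriv f ξ := by
      apply integral_eq_sub_of_hasDerivAt
      · intro s _
        exact ((hf1.differentiable (by norm_num)) s).hasDerivAt
      · exact hf2.intervalIntegrable _ _
    have h1 : |deriv f y| = |∫ s in ξ..y, deriv (deriv f) s| := by
      rw [hftc, hξ0, sub_zero]
    rw [h1]
    calc |∫ s in ξ..y, deriv (deriv f) s| ≤ abs (∫ s in ξ..y, |deriv (deriv f) s|) := by
          simpa using intervalIntegral.norm_integral_le_abs_integral_norm
            (f := fun s => deriv (deriv f) s) (a := ξ) (b := y)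
      _ ≤ |A| := by
          apply intervalIntegral.abs_integral_mono_interval
          · rw [Set.uIoc_of_le (zero_le_one (α := ℝ)), Set.uIoc]
            exact Set.Ioc_subset_Ioc (le_min hξI.1 hy.1) (max_le hξI.2 hy.2)
          · exact Filter.Eventually.of_forall fun s => abs_nonneg _
          · exact (hf2.abs).intervalIntegrable _ _
      _ = A := abs_of_nonneg (intervalIntegral.integral_nonneg one_pos.le
            fun s _ => abs_nonneg _)
  -- FTC for f
  have hftc : ∫ s in (0:ℝ)..x, deriv f s = f x - f 0 := by
    apply integral_eq_sub_of_hasDerivAt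
    · intro s _; exact ((hf.differentiable (by norm_num)) s).hasDerivAt
    · exact hf1c.intervalIntegrable _ _
  rw [← hftc]
  calc |∫ s in (0:ℝ)..x, deriv f s| ≤ A * |x - 0| := by
        rw [← Real.norm_eq_abs]
        apply intervalIntegral.norm_integral_le_of_norm_le_const
        intro s hs
        rw [Set.uIoc_of_le hx.1] at hs
        rw [Real.norm_eq_abs]
        exact hd s ⟨hs.1.le, hs.2.trans hx.2⟩
    _ ≤ A * 1 := by
        have hA0 : 0 ≤ A := intervalIntegral.integral_nonneg one_pos.le fun s _ => abs_nonneg _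
        apply mul_le_mul_of_nonneg_left _ hA0
        rw [sub_zero, abs_of_nonneg hx.1]; exact hx.2
    _ = A := mul_one A

lemma dAlembert {c : ℝ} (hc : 0 < c) (q : ℝ → ℝ → ℝ)
    (hq : ContDiff ℝ 2 (Function.uncurry q))
    (hwave : ∀ t x : ℝ, deriv (deriv (fun s => q s x)) t
      = c^2 * deriv (deriv (fun y => q t y)) x) :
    ∀ a b : ℝ, q ((a-b)/(2*c)) ((a+b)/2)
      = q ((a-0)/(2*c)) ((a+0)/2) + q ((0-b)/(2*c)) ((0+b)/2)
        - q ((0-0)/(2*c)) ((0+0)/2) := by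
  have hc2 : (2*c) ≠ 0 := by positivity
  set U := Function.uncurry q with hU
  have hUd : Differentiable ℝ U := hq.differentiable (by norm_num)
  have h2cd : Differentiable ℝ (fderiv ℝ U) :=
    (hq.fderiv_right (m := 1) (by norm_num)).differentiable (by norm_num)
  set B := fderiv ℝ (fderiv ℝ U) with hB
  -- partial derivatives in coordinate directions
  have pd_t : ∀ t x : ℝ, HasDerivAt (fun s => q s x) (fderiv ℝ U (t, x) (1, 0)) t := by
    intro t x
    exact comp_line hUd (hasDerivAt_id t) (hasDerivAt_const t x)
  have pd_x : ∀ t x : ℝ, HasDerivAt (fun y => q t y) (fderiv ℝ U (t, x) (0, 1)) x := by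
    intro t x
    exact comp_line hUd (hasDerivAt_const x t) (hasDerivAt_id x)
  -- second derivatives
  have qtt : ∀ t x : ℝ, deriv (deriv (fun s => q s x)) t = B (t, x) (1, 0) (1, 0) := by
    intro t x
    have h1 : deriv (fun s => q s x) = fun s => fderiv ℝ U (s, x) ((1 : ℝ), (0 : ℝ)) := by
      funext s; exact (pd_t s x).deriv
    rw [h1]
    have h2 : HasDerivAt (fun s : ℝ => fderiv ℝ U (s, x) ((1 : ℝ), (0 : ℝ)))
        (((fderiv ℝ (fderiv ℝ U) (t, x)).flip (1, 0)) (1, 0)) t := by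
      have h := (applyv_fderiv hq (1, 0) (t, x)).comp_hasDerivAt t
        ((hasDerivAt_id t).prodMk (hasDerivAt_const t x))
      exact h
    rw [h2.deriv]
    simp [ContinuousLinearMap.flip_apply, hB]
  have qxx : ∀ t x : ℝ, deriv (deriv (fun y => q t y)) x = B (t, x) (0, 1) (0, 1) := by
    intro t x
    have h1 : deriv (fun y => q t y) = fun y => fderiv ℝ U (t, y) ((0 : ℝ), (1 : ℝ)) := by
      funext y; exact (pd_x t y).deriv
    rw [h1]
    have h2 : HasDerivAt (fun y : ℝ => fderiv ℝ U (t, y) ((0 : ℝ), (1 : ℝ)))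
        (((fderiv ℝ (fderiv ℝ U) (t, x)).flip (0, 1)) (0, 1)) x :=
      (applyv_fderiv hq (0, 1) (t, x)).comp_hasDerivAt x
        ((hasDerivAt_const x t).prodMk (hasDerivAt_id x))
    rw [h2.deriv]
    simp [ContinuousLinearMap.flip_apply, hB]
  have hwave' : ∀ p : ℝ × ℝ, B p (1, 0) (1, 0) = c^2 * B p (0, 1) (0, 1) := by
    rintro ⟨t, x⟩
    rw [← qtt t x, ← qxx t x]; exact hwave t x
  have hsym : ∀ (p v w : ℝ × ℝ), B p v w = B p w v := fun p v w =>
    second_derivative_symmetric (fun y => (hUd y).hasFDerivAt) ((h2cd p).hasFDerivAt) v w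
  -- the key vanishing of the mixed characteristic second derivative
  have key0 : ∀ p : ℝ × ℝ,
      (B p) ((1/(2*c), 1/2) : ℝ × ℝ) ((-(1/(2*c)), 1/2) : ℝ × ℝ) = 0 := by
    intro p
    have hv : ((1/(2*c), 1/2) : ℝ × ℝ)
        = (1/(2*c)) • ((1 : ℝ), (0 : ℝ)) + (1/2 : ℝ) • ((0 : ℝ), (1 : ℝ)) := by
      simp [Prod.ext_iff]
    have hw : ((-(1/(2*c)), 1/2) : ℝ × ℝ)
        = (-(1/(2*c))) • ((1 : ℝ), (0 : ℝ)) + (1/2 : ℝ) • ((0 : ℝ), (1 : ℝ)) := by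
      simp [Prod.ext_iff]
    rw [hv, hw]
    simp only [map_add, map_smul, ContinuousLinearMap.add_apply,
      ContinuousLinearMap.smul_apply, smul_eq_mul]
    rw [hwave' p, hsym p (1, 0) (0, 1)]
    field_simp
    ring
  -- line-derivative facts
  have hline1 : ∀ a b : ℝ, HasDerivAt (fun b => (a - b)/(2*c)) (-(1/(2*c))) b := by
    intro a b
    have := ((hasDerivAt_id b).const_sub a).div_const (2*c)
    exact this.congr_deriv (by ring)
  have hline2 : ∀ a b : ℝ, HasDerivAt (fun b => (a + b)/2) (1/2 : ℝ) b := by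
    intro a b
    have := ((hasDerivAt_id b).const_add a).div_const 2
    exact this.congr_deriv (by ring)
  have hline1a : ∀ b a : ℝ, HasDerivAt (fun a => (a - b)/(2*c)) (1/(2*c)) a := by
    intro b a
    have := ((hasDerivAt_id a).sub_const b).div_const (2*c)
    exact this.congr_deriv (by ring)
  have hline2a : ∀ b a : ℝ, HasDerivAt (fun a => (a + b)/2) (1/2 : ℝ) a := by
    intro b a
    have := ((hasDerivAt_id a).add_const b).div_const 2
    exact this.congr_deriv (by ring)
  set P : ℝ × ℝ → ℝ := fun p => fderiv ℝ U p (-(1/(2*c)), 1/2) with hP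
  have hWb : ∀ a b : ℝ, HasDerivAt (fun b => q ((a - b)/(2*c)) ((a + b)/2))
      (P ((a - b)/(2*c), (a + b)/2)) b := by
    intro a b
    exact comp_line hUd (hline1 a b) (hline2 a b)
  have hPa : ∀ b a : ℝ, HasDerivAt (fun a => P ((a - b)/(2*c), (a + b)/2)) 0 a := by
    intro b a
    have h := (applyv_fderiv hq (-(1/(2*c)), 1/2) ((a - b)/(2*c), (a + b)/2)).comp_hasDerivAt a
      ((hline1a b a).prodMk (hline2a b a))
    have h0 : ((B ((a - b)/(2*c), (a + b)/2)).flip (-(1/(2*c)), 1/2))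
        ((1/(2*c)), (1/2 : ℝ)) = 0 := by
      rw [ContinuousLinearMap.flip_apply]; exact key0 _
    rw [← h0]
    exact h
  have hconst1 : ∀ b a : ℝ, P ((a - b)/(2*c), (a + b)/2) = P ((0 - b)/(2*c), (0 + b)/2) := by
    intro b a
    exact is_const_of_deriv_eq_zero (fun a => (hPa b a).differentiableAt)
      (fun a => (hPa b a).deriv) a 0
  intro a b
  have hψ : ∀ b : ℝ, HasDerivAt (fun b => q ((a - b)/(2*c)) ((a + b)/2)
      - q ((0 - b)/(2*c)) ((0 + b)/2)) 0 b := by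
    intro b
    have := (hWb a b).sub (hWb 0 b)
    rwa [hconst1 b a, sub_self] at this
  have := is_const_of_deriv_eq_zero (f := fun b => q ((a - b)/(2*c)) ((a + b)/2)
      - q ((0 - b)/(2*c)) ((0 + b)/2)) (fun b => (hψ b).differentiableAt)
      (fun b => (hψ b).deriv) b 0
  linarith [this]

lemma qbound (ω' : ℝ) (hω : 0 < ω')
    (X V : ℝ → ℝ) (hX : ContDiff ℝ 4 X) (hV : ContDiff ℝ 4 V)
    (hX0 : X 0 = 1) (hX1 : X 1 = 1) (hV0 : V 0 = 0) (hV1 : V 1 = 0)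
    (q : ℝ → ℝ → ℝ) (hq : ContDiff ℝ 2 (Function.uncurry q))
    (hwave : ∀ t x : ℝ, deriv (deriv (fun s => q s x)) t
      = ω'^2 * deriv (deriv (fun y => q t y)) x)
    (hqb0 : ∀ t, q t 0 = 0) (hqb1 : ∀ t, q t 1 = 0)
    (hqi : ∀ x, q 0 x = X x - 1) (hqit : ∀ x, deriv (fun s => q s x) 0 = V x)
    (α β : ℝ)
    (hα : α = ∫ s in (0:ℝ)..1, |deriv (deriv X) s|)
    (hβ : β = ∫ s in (0:ℝ)..1, |deriv (deriv V) s|) :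
    ∀ t x : ℝ, |q t x| ≤ 2 * α + β / ω' := by
  have hω0 : ω' ≠ 0 := ne_of_gt hω
  have hα0 : 0 ≤ α := hα ▸ intervalIntegral.integral_nonneg one_pos.le fun s _ => abs_nonneg _
  have hβ0 : 0 ≤ β := hβ ▸ intervalIntegral.integral_nonneg one_pos.le fun s _ => abs_nonneg _
  set U := Function.uncurry q with hUdef
  have hUd : Differentiable ℝ U := hq.differentiable (by norm_num)
  have hpar := dAlembert hω q hq hwave
  set FF : ℝ → ℝ := fun y => q (y/(2*ω')) (y/2) - q 0 0 with hFFdef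
  set GG : ℝ → ℝ := fun y => q (-y/(2*ω')) (y/2) with hGGdef
  -- the factorization q t x = FF (x+ct) + GG (x-ct)
  have key : ∀ t x : ℝ, q t x = FF (x + ω'*t) + GG (x - ω'*t) := by
    intro t x
    have h := hpar (x + ω'*t) (x - ω'*t)
    have e0 : ((x + ω'*t) - (x - ω'*t))/(2*ω') = t := by field_simp; ring
    have e1 : ((x + ω'*t) + (x - ω'*t))/2 = x := by ring
    have e2 : ((x + ω'*t) - 0)/(2*ω') = (x + ω'*t)/(2*ω') := by ring
    have e3 : ((x + ω'*t) + 0)/2 = (x + ω'*t)/2 := by ring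
    have e4 : ((0:ℝ) - (x - ω'*t))/(2*ω') = -(x - ω'*t)/(2*ω') := by ring
    have e5 : ((0:ℝ) + (x - ω'*t))/2 = (x - ω'*t)/2 := by ring
    have e6 : ((0:ℝ) - 0)/(2*ω') = (0:ℝ)/(2*ω') := by ring
    have e7 : ((0:ℝ) + 0)/2 = (0:ℝ)/2 := by ring
    rw [e0, e1, e2, e3, e4, e5, e6, e7] at h
    simp only [zero_div] at h
    simp only [hFFdef, hGGdef]
    linarith [h]
  -- derivatives of FF and GG
  set dFF : ℝ → ℝ := fun y => fderiv ℝ U (y/(2*ω'), y/2) (1/(2*ω'), 1/2) with hdFFdef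
  set dGG : ℝ → ℝ := fun y => fderiv ℝ U (-y/(2*ω'), y/2) (-1/(2*ω'), 1/2) with hdGGdef
  have hFF : ∀ y : ℝ, HasDerivAt FF (dFF y) y := by
    intro y
    have l1 : HasDerivAt (fun y : ℝ => y/(2*ω')) (1/(2*ω')) y := (hasDerivAt_id y).div_const _
    have l2 : HasDerivAt (fun y : ℝ => y/2) (1/2 : ℝ) y := (hasDerivAt_id y).div_const _
    exact (comp_line hUd l1 l2).sub_const (q 0 0)
  have hGG : ∀ y : ℝ, HasDerivAt GG (dGG y) y := by
    intro y
    have l1 : HasDerivAt (fun y : ℝ => -y/(2*ω')) (-1/(2*ω')) y :=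
      ((hasDerivAt_id y).neg).div_const _
    have l2 : HasDerivAt (fun y : ℝ => y/2) (1/2 : ℝ) y := (hasDerivAt_id y).div_const _
    exact comp_line hUd l1 l2
  -- the initial velocity relation
  have hV' : ∀ x : ℝ, dFF x * ω' - dGG x * ω' = V x := by
    intro x
    have l1 : HasDerivAt (fun s : ℝ => x + ω'*s) ω' 0 := by
      simpa using ((hasDerivAt_id (0:ℝ)).const_mul ω').const_add x
    have l2 : HasDerivAt (fun s : ℝ => x - ω'*s) (-ω') 0 := by
      simpa using ((hasDerivAt_id (0:ℝ)).const_mul ω').const_sub x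
    have hqs : HasDerivAt (fun s : ℝ => FF (x + ω'*s) + GG (x - ω'*s))
        (dFF (x + ω'*0) * ω' + dGG (x - ω'*0) * (-ω')) 0 :=
      ((hFF _).comp 0 l1).add ((hGG _).comp 0 l2)
    have hfeq : (fun s => q s x) = fun s => FF (x + ω'*s) + GG (x - ω'*s) :=
      funext fun s => key s x
    have hd : deriv (fun s => q s x) 0
        = dFF (x + ω'*0) * ω' + dGG (x - ω'*0) * (-ω') := by
      rw [hfeq]; exact hqs.deriv
    rw [hqit x] at hd
    simp only [mul_zero, add_zero, sub_zero] at hd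
    linarith [hd]
  -- FTC for FF - GG
  have hDval : ∀ y : ℝ, FF y - GG y = 2 * FF 0 + (∫ s in (0:ℝ)..y, V s)/ω' := by
    have hGG0 : GG 0 = -FF 0 := by
      have h := key 0 0
      rw [hqb0 0] at h
      simp only [mul_zero, add_zero, sub_zero] at h
      linarith [h]
    intro y
    have hD : ∀ s : ℝ, HasDerivAt (fun y => FF y - GG y) (V s / ω') s := by
      intro s
      have h := (hFF s).sub (hGG s)
      have e : dFF s - dGG s = V s / ω' := by
        rw [eq_div_iff hω0]; linarith [hV' s]
      rwa [e] at h
    have hint : ∫ s in (0:ℝ)..y, V s / ω' = (FF y - GG y) - (FF 0 - GG 0) :=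
      integral_eq_sub_of_hasDerivAt (fun s _ => hD s)
        ((hV.continuous.div_const ω').intervalIntegrable 0 y)
    rw [intervalIntegral.integral_div] at hint
    rw [hGG0] at hint
    linarith [hint]
  -- boundary relations
  have hGneg : ∀ s : ℝ, GG (-s) = -FF s := by
    intro s
    have h := key (s/ω') 0
    rw [hqb0] at h
    have e : ω' * (s/ω') = s := by field_simp
    rw [e] at h
    simp only [zero_add, zero_sub] at h
    linarith [h]
  have hsum : ∀ y : ℝ, FF y + GG y = X y - 1 := by
    intro y
    have h := key 0 y
    rw [hqi y] at h
    simp only [mul_zero, add_zero, sub_zero] at h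
    linarith [h]
  set H : ℝ → ℝ := fun y => FF y - FF 0 with hHdef
  have hHper : Function.Periodic H 2 := by
    intro y
    have h := key ((y+1)/ω') 1
    rw [hqb1] at h
    have e : ω' * ((y+1)/ω') = y + 1 := by field_simp
    rw [e] at h
    have e2 : (1 : ℝ) + (y + 1) = y + 2 := by ring
    have e3 : (1 : ℝ) - (y + 1) = -y := by ring
    rw [e2, e3] at h
    have := hGneg y
    simp only [hHdef]
    linarith [h, this]
  -- formula for H on [0,1]
  have hH01 : ∀ y ∈ Icc (0:ℝ) 1, H y
      = (X y - 1)/2 + (∫ s in (0:ℝ)..y, V s)/(2*ω') := by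
    intro y _
    have h1 := hsum y
    have h2 := hDval y
    have e : (∫ s in (0:ℝ)..y, V s)/(2*ω') = ((∫ s in (0:ℝ)..y, V s)/ω')/2 := by
      rw [div_div, mul_comm]
    simp only [hHdef]
    linear_combination h1/2 + h2/2 - e
  have hH10 : ∀ y ∈ Icc (-1:ℝ) 0, H y
      = -((X (-y) - 1)/2) + (∫ s in (0:ℝ)..(-y), V s)/(2*ω') := by
    intro y hy
    have hx' : -y ∈ Icc (0:ℝ) 1 := ⟨by linarith [hy.2], by linarith [hy.1]⟩
    have e1 := hH01 (-y) hx'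
    have e2 := hDval (-y)
    have e3 := hGneg y
    have e : (∫ s in (0:ℝ)..(-y), V s)/(2*ω') = ((∫ s in (0:ℝ)..(-y), V s)/ω')/2 := by
      rw [div_div, mul_comm]
    simp only [hHdef] at *
    linear_combination -e1 + e2 + e3 - 2*e
  -- data bounds
  have hXb : ∀ y ∈ Icc (0:ℝ) 1, |X y - 1| ≤ α := by
    intro y hy
    have := data_bound hX (hX0.trans hX1.symm) hy
    rwa [hX0, ← hα] at this
  have hVb : ∀ y ∈ Icc (0:ℝ) 1, |V y| ≤ β := by
    intro y hy
    have := data_bound hV (hV0.trans hV1.symm) hy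
    rwa [hV0, sub_zero, ← hβ] at this
  have hIVb : ∀ y ∈ Icc (0:ℝ) 1, |∫ s in (0:ℝ)..y, V s| ≤ β := by
    intro y hy
    rw [← Real.norm_eq_abs]
    calc ‖∫ s in (0:ℝ)..y, V s‖ ≤ β * |y - 0| := by
          apply intervalIntegral.norm_integral_le_of_norm_le_const
          intro s hs
          rw [Set.uIoc_of_le hy.1] at hs
          rw [Real.norm_eq_abs]
          exact hVb s ⟨hs.1.le, hs.2.trans hy.2⟩
      _ ≤ β * 1 := by
          apply mul_le_mul_of_nonneg_left _ hβ0
          rw [sub_zero, abs_of_nonneg hy.1]; exact hy.2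
      _ = β := mul_one β
  -- bound for H on the fundamental domain [-1,1]
  have hHband : ∀ y ∈ Icc (-1:ℝ) 1, |H y| ≤ α/2 + β/(2*ω') := by
    intro y hy
    have h2ω : (0:ℝ) < 2*ω' := by positivity
    rcases le_or_gt 0 y with h0 | h0
    · have hy' : y ∈ Icc (0:ℝ) 1 := ⟨h0, hy.2⟩
      rw [hH01 y hy']
      have h1 := abs_le.mp (hXb y hy')
      have h2 := abs_le.mp (hIVb y hy')
      have l1 : (∫ s in (0:ℝ)..y, V s)/(2*ω') ≤ β/(2*ω') := by gcongr; exact h2.2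
      have l2 : -(β/(2*ω')) ≤ (∫ s in (0:ℝ)..y, V s)/(2*ω') := by
        rw [← neg_div]; gcongr; exact h2.1
      rw [abs_le]
      constructor <;> [linarith; linarith]
    · have hy' : y ∈ Icc (-1:ℝ) 0 := ⟨hy.1, h0.le⟩
      have hx' : -y ∈ Icc (0:ℝ) 1 := ⟨by linarith, by linarith [hy.1]⟩
      rw [hH10 y hy']
      have h1 := abs_le.mp (hXb (-y) hx')
      have h2 := abs_le.mp (hIVb (-y) hx')
      have l1 : (∫ s in (0:ℝ)..(-y), V s)/(2*ω') ≤ β/(2*ω') := by gcongr; exact h2.2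
      have l2 : -(β/(2*ω')) ≤ (∫ s in (0:ℝ)..(-y), V s)/(2*ω') := by
        rw [← neg_div]; gcongr; exact h2.1
      rw [abs_le]
      constructor <;> [linarith; linarith]
  have hHall : ∀ y : ℝ, |H y| ≤ α/2 + β/(2*ω') := by
    intro y
    obtain ⟨z, hz, he⟩ := hHper.exists_mem_Ico two_pos y (-1)
    rw [he]
    exact hHband z ⟨hz.1, by linarith [hz.2]⟩
  -- final bound
  intro t x
  have hq1 : q t x = H (x + ω'*t) - H (ω'*t - x) := by
    have h := key t x
    have e : x - ω'*t = -(ω'*t - x) := by ring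
    rw [e, hGneg (ω'*t - x)] at h
    simp only [hHdef]
    linarith [h]
  rw [hq1]
  have b1 := hHall (x + ω'*t)
  have b2 := hHall (ω'*t - x)
  have e : β/(2*ω') = (β/ω')/2 := by rw [div_div, mul_comm]
  have hβω : 0 ≤ β/ω' := div_nonneg hβ0 hω.le
  calc |H (x + ω'*t) - H (ω'*t - x)| ≤ |H (x + ω'*t)| + |H (ω'*t - x)| := abs_sub _ _
    _ ≤ 2 * α + β / ω' := by linarith [b1, b2]

/-- Non-collision of continuum particles: with `γ = 2α + β/ω' < 1` and `G` built from
the wave-equation solution `q` as before, for all `t ≥ 0` and `0 ≤ z₁ < z₂ ≤ 1`,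
`(1-γ)(z₂-z₁) ≤ G(t,z₂) - G(t,z₁) ≤ (1+γ)(z₂-z₁)`; in particular `G(t,·)` is
strictly increasing on `[0,1]`. -/
theorem stmt_14 (ω' v : ℝ) (hω : 0 < ω')
    (X V : ℝ → ℝ) (hX : ContDiff ℝ 4 X) (hV : ContDiff ℝ 4 V)
    (hX0 : X 0 = 1) (hX1 : X 1 = 1) (hV0 : V 0 = 0) (hV1 : V 1 = 0)
    (q : ℝ → ℝ → ℝ) (hq : ContDiff ℝ 2 (Function.uncurry q))
    (hwave : ∀ t x : ℝ, deriv (deriv (fun s => q s x)) t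
      = ω'^2 * deriv (deriv (fun y => q t y)) x)
    (hqb0 : ∀ t, q t 0 = 0) (hqb1 : ∀ t, q t 1 = 0)
    (hqi : ∀ x, q 0 x = X x - 1) (hqit : ∀ x, deriv (fun s => q s x) 0 = V x)
    (G : ℝ → ℝ → ℝ)
    (hG : ∀ t z : ℝ, G t z =
      (v * t + ω'^2 * ∫ s in (0:ℝ)..t, (t - s) * deriv (fun y => q s y) 0)
        + z + ∫ x' in (0:ℝ)..z, q t x')
    (α β γ : ℝ)
    (hα : α = ∫ s in (0:ℝ)..1, |deriv (deriv X) s|)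
    (hβ : β = ∫ s in (0:ℝ)..1, |deriv (deriv V) s|)
    (hγ : γ = 2 * α + β / ω') (hγ1 : γ < 1) :
    ∀ t : ℝ, 0 ≤ t → ∀ z₁ z₂ : ℝ, 0 ≤ z₁ → z₁ < z₂ → z₂ ≤ 1 →
      (1 - γ) * (z₂ - z₁) ≤ G t z₂ - G t z₁ ∧
      G t z₂ - G t z₁ ≤ (1 + γ) * (z₂ - z₁) := by
  intro t ht z₁ z₂ hz₁ hlt hz₂
  have hγb : ∀ s x : ℝ, |q s x| ≤ γ := fun s x =>
    hγ ▸ qbound ω' hω X V hX hV hX0 hX1 hV0 hV1 q hq hwave hqb0 hqb1 hqi hqit α β hα hβ s x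
  have hcont : Continuous (fun x => q t x) := hq.continuous.comp (Continuous.prodMk_right t)
  have hsplit := intervalIntegral.integral_add_adjacent_intervals (μ := MeasureTheory.volume)
    (hcont.intervalIntegrable 0 z₁) (hcont.intervalIntegrable z₁ z₂)
  have hdiff : G t z₂ - G t z₁ = (z₂ - z₁) + ∫ x' in z₁..z₂, q t x' := by
    rw [hG t z₂, hG t z₁]
    linarith [hsplit]
  have habs : |∫ x' in z₁..z₂, q t x'| ≤ γ * (z₂ - z₁) := by
    rw [← Real.norm_eq_abs]
    calc ‖∫ x' in z₁..z₂, q t x'‖ ≤ γ * |z₂ - z₁| := by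
          apply intervalIntegral.norm_integral_le_of_norm_le_const
          intro x _
          rw [Real.norm_eq_abs]
          exact hγb t x
      _ = γ * (z₂ - z₁) := by rw [abs_of_nonneg (by linarith)]
  obtain ⟨hl, hr⟩ := abs_le.mp habs
  have e1 : (1 - γ) * (z₂ - z₁) = (z₂ - z₁) - γ * (z₂ - z₁) := by ring
  have e2 : (1 + γ) * (z₂ - z₁) = (z₂ - z₁) + γ * (z₂ - z₁) := by ring
  constructor
  · linarith
  · linarith
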